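/- arXiv:2504.03835 — 4 statements merged into one kernel-verified Lean document; each statement's English description precedes it below -/
import Mathlib

section
/- Let d ≥ 1 and let Φ be a pure density matrix on ℂ² ⊗ ℂ^d (i.e. Φ = |Ψ⟩⟨Ψ| for a unit vector Ψ) whose partial trace over ℂ^d equals the maximally mixed qubit state (1/2)·I₂, and let φ be any pure density matrix on ℂ². Then there exists no density matrix ψ on ℂ² ⊗ ℂ^d such that the range (support) of ψ is contained in the range of Φ and the range of the partial trace of ψ over ℂ^d is contained in the range of φ. (This is the mathematical core of the state agreement paradox, Theorem 1: no quantum state exists on which both Alice, who assigns a pure state to the qubit Q, and Bob, who assigns a pure entangled state to the joint system Q L_A, can agree.) -/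
open Matrix BigOperators
open scoped ComplexOrder

/-- Partial trace over the second tensor factor. -/
noncomputable def ptrace2 {d : ℕ} (ρ : Matrix (Fin 2 × Fin d) (Fin 2 × Fin d) ℂ) :
    Matrix (Fin 2) (Fin 2) ℂ :=
  fun i j => ∑ k : Fin d, ρ (i, k) (j, k)

/-- A density matrix: positive semidefinite with trace one. -/
def IsDensity {n : Type*} [Fintype n] [DecidableEq n] (ρ : Matrix n n ℂ) : Prop :=
  ρ.PosSemidef ∧ ρ.trace = 1

/-- A pure density matrix: `|Ψ⟩⟨Ψ|` for a unit vector `Ψ`. -/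
def IsPureDensity {n : Type*} [Fintype n] [DecidableEq n] (ρ : Matrix n n ℂ) : Prop :=
  IsDensity ρ ∧ ∃ v : n → ℂ, (∑ i, star (v i) * v i) = 1 ∧ ρ = Matrix.vecMulVec v (star v)

/-- The support (range) of a matrix, viewed as a linear map. -/
noncomputable def supp {n : Type*} [Fintype n] [DecidableEq n] (ρ : Matrix n n ℂ) : Submodule ℂ (n → ℂ) :=
  LinearMap.range ρ.mulVecLin

lemma supp_vecMulVec_le {n : Type*} [Fintype n] [DecidableEq n] (v : n → ℂ) :
    supp (Matrix.vecMulVec v (star v)) ≤ Submodule.span ℂ {v} := by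
  rintro x ⟨y, rfl⟩
  have : (Matrix.vecMulVec v (star v)).mulVecLin y = (star v ⬝ᵥ y) • v := by
    funext i
    simp [Matrix.mulVecLin_apply, Matrix.mulVec, dotProduct, Matrix.vecMulVec_apply,
      Finset.mul_sum, mul_comm, mul_left_comm]
  rw [this]
  exact Submodule.smul_mem _ _ (Submodule.mem_span_singleton_self v)

/-- State agreement paradox (Theorem 1, mathematical core): if Bob's state `Φ` on `Q L_A`
is pure with maximally mixed marginal on the qubit `Q`, and Alice's state `φ` on `Q` is pure,
then there is no joint state `ψ` both can agree on. -/
theorem state_agreement_paradox {d : ℕ} (hd : 1 ≤ d)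
    (Φ : Matrix (Fin 2 × Fin d) (Fin 2 × Fin d) ℂ) (hΦ : IsPureDensity Φ)
    (hΦmarg : ptrace2 Φ = (1 / 2 : ℂ) • (1 : Matrix (Fin 2) (Fin 2) ℂ))
    (φ : Matrix (Fin 2) (Fin 2) ℂ) (hφ : IsPureDensity φ) :
    ¬ ∃ ψ : Matrix (Fin 2 × Fin d) (Fin 2 × Fin d) ℂ,
        IsDensity ψ ∧ supp ψ ≤ supp Φ ∧ supp (ptrace2 ψ) ≤ supp φ := by
  rintro ⟨ψ, ⟨hψpsd, hψtr⟩, hs1, hs2⟩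
  obtain ⟨⟨hΦpsd, hΦtr⟩, Ψ, hΨnorm, rfl⟩ := hΦ
  obtain ⟨⟨hφpsd, hφtr⟩, w, hwnorm, rfl⟩ := hφ
  -- columns of ψ are multiples of Ψ
  have hsupp : supp ψ ≤ Submodule.span ℂ {Ψ} := hs1.trans (supp_vecMulVec_le Ψ)
  have hcol : ∀ j, ∃ c : ℂ, ∀ i, ψ i j = c * Ψ i := by
    intro j
    have hmem : ψ.mulVecLin (Pi.single j 1) ∈ Submodule.span ℂ {Ψ} :=
      hsupp ⟨Pi.single j 1, rfl⟩
    obtain ⟨c, hc⟩ := Submodule.mem_span_singleton.mp hmem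
    refine ⟨c, fun i => ?_⟩
    have := congr_fun hc i
    simpa [Matrix.mulVecLin_apply, Matrix.mulVec_single] using this.symm
  choose c hc using hcol
  -- Ψ is nonzero somewhere
  have hΨne : ∃ j0, Ψ j0 ≠ 0 := by
    by_contra h
    push_neg at h
    simp [h] at hΨnorm
  obtain ⟨j0, hj0⟩ := hΨne
  have hherm : ∀ i j, ψ j i = star (ψ i j) := fun i j => (hψpsd.1.apply j i).symm
  -- ψ = λ • |Ψ⟩⟨Ψ|
  set lam : ℂ := star (c j0) / Ψ j0 with hlam
  have hψeq : ∀ i j, ψ i j = lam * Ψ i * star (Ψ j) := by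
    intro i j
    have h1 : c j * Ψ j0 = star (c j0) * star (Ψ j) := by
      have := hherm j j0
      rw [hc j0 j, hc j j0] at this
      simpa [star_mul', mul_comm] using this
    have hcj : c j = lam * star (Ψ j) := by
      rw [hlam, div_mul_eq_mul_div, eq_div_iff hj0]
      linear_combination h1
    rw [hc j i, hcj]; ring
  -- trace gives lam = 1
  have htr : lam = 1 := by
    have : ψ.trace = lam * ∑ i, star (Ψ i) * Ψ i := by
      rw [Matrix.trace, Finset.mul_sum]
      exact Finset.sum_congr rfl fun i _ => by
        rw [Matrix.diag_apply, hψeq i i]; ring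
    rw [hΨnorm, mul_one] at this
    rw [← this, hψtr]
  have hψΦ : ψ = Matrix.vecMulVec Ψ (star Ψ) := by
    ext i j
    rw [hψeq i j, htr, one_mul, Matrix.vecMulVec_apply]
    rfl
  -- hence ptrace2 ψ = (1/2) • 1, whose support is ⊤
  have hpt : ptrace2 ψ = (1 / 2 : ℂ) • (1 : Matrix (Fin 2) (Fin 2) ℂ) := by
    rw [hψΦ]; exact hΦmarg
  have htop : supp (ptrace2 ψ) = ⊤ := by
    rw [hpt]
    rw [Submodule.eq_top_iff']
    intro x
    refine ⟨(2 : ℂ) • x, ?_⟩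
    funext i
    simp [Matrix.mulVecLin_apply, Matrix.mulVec, dotProduct, Matrix.one_apply,
      Finset.sum_ite_eq, smul_eq_mul]
  -- but supp φ has dimension ≤ 1
  have hle : (⊤ : Submodule ℂ (Fin 2 → ℂ)) ≤ Submodule.span ℂ {w} := by
    rw [← htop]
    exact hs2.trans (supp_vecMulVec_le w)
  have h1 : Module.finrank ℂ (Fin 2 → ℂ) ≤ Module.finrank ℂ (Submodule.span ℂ {w}) := by
    simpa using Submodule.finrank_mono hle
  have h2 : Module.finrank ℂ (Submodule.span ℂ {w}) ≤ 1 := (finrank_span_le_card _).trans (by simp)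
  have h3 : Module.finrank ℂ (Fin 2 → ℂ) = 2 := by simp
  omega
end

section
/- Let |0⟩, |1⟩ be the computational basis of ℂ² and |0̄⟩ = (|0⟩+|1⟩)/√2, |1̄⟩ = (|0⟩−|1⟩)/√2 the diagonal basis. There exist no functions P : {0,1} × {0,1} → ℝ≥0 and σ : {0,1} × {0,1} → {density matrices on ℂ²} such that (i) for every r_A ∈ {0,1}: Σ_{r̄_B ∈ {0,1}} P(r_A, r̄_B) · σ(r_A, r̄_B) = (1/2)|r_A⟩⟨r_A|, and (ii) for every r̄_B ∈ {0,1}: Σ_{r_A ∈ {0,1}} P(r_A, r̄_B) · σ(r_A, r̄_B) = (1/2)|r̄_B⟩⟨r̄_B| (with |0̄⟩⟨0̄| for r̄_B = 0 and |1̄⟩⟨1̄| for r̄_B = 1). (This is the nonexistence of the update rule ℛ, evaluated on a qubit maximally entangled with the reference S, which is the mathematical core of the objective outcome paradox, Theorem 2.) -/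
open Matrix BigOperators
open scoped ComplexOrder

/-- The computational basis vectors `|0⟩, |1⟩` of `ℂ²`. -/
def ket (r : Fin 2) : Fin 2 → ℂ := fun i => if i = r then 1 else 0

/-- The diagonal basis vectors `|0̄⟩ = (|0⟩+|1⟩)/√2` and `|1̄⟩ = (|0⟩−|1⟩)/√2`. -/
noncomputable def ketbar (r : Fin 2) : Fin 2 → ℂ :=
  fun i => ((Real.sqrt 2)⁻¹ : ℂ) * (if i = 0 then 1 else if r = 0 then 1 else -1)

/-- The rank-one projector `|v⟩⟨v|`. -/
def proj {n : Type*} [Fintype n] (v : n → ℂ) : Matrix n n ℂ :=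
  Matrix.vecMulVec v (star v)

lemma diag_nonneg' {n : Type*} [Fintype n] [DecidableEq n] {ρ : Matrix n n ℂ}
    (h : ρ.PosSemidef) (i : n) : 0 ≤ ρ i i := by
  have := h.dotProduct_mulVec_nonneg (Pi.single i 1)
  simpa [dotProduct, mulVec, Pi.single_apply, Finset.mul_sum] using this

lemma offdiag_zero {n : Type*} [Fintype n] [DecidableEq n] {ρ : Matrix n n ℂ}
    (h : ρ.PosSemidef) (i j : n) (hi : ρ i i = 0) : ρ j i = 0 := by
  have h0 : star (Pi.single i 1 : n → ℂ) ⬝ᵥ ρ *ᵥ (Pi.single i 1) = 0 := by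
    simpa [dotProduct, mulVec, Pi.single_apply, Finset.mul_sum] using hi
  have h1 := (h.dotProduct_mulVec_zero_iff (Pi.single i 1)).mp h0
  have := congrFun h1 j
  simpa [mulVec, dotProduct, Pi.single_apply] using this

/-- Objective outcome paradox (core of Theorem 2): there is no update rule
`(P, σ)` compatible with both Alice's computational-basis measurement and Bob's
diagonal-basis measurement on a qubit maximally entangled with the reference `S`. -/
theorem no_update_rule :
    ¬ ∃ (P : Fin 2 → Fin 2 → NNReal) (σ : Fin 2 → Fin 2 → Matrix (Fin 2) (Fin 2) ℂ),
      (∀ rA rB, IsDensity (σ rA rB)) ∧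
      (∀ rA : Fin 2,
        ∑ rB : Fin 2, ((P rA rB : ℝ) : ℂ) • σ rA rB = ((1 : ℂ) / 2) • proj (ket rA)) ∧
      (∀ rB : Fin 2,
        ∑ rA : Fin 2, ((P rA rB : ℝ) : ℂ) • σ rA rB = ((1 : ℂ) / 2) • proj (ketbar rB)) := by
  rintro ⟨P, σ, hd, h1, h2⟩
  -- Nonnegativity of each term
  have hPnn : ∀ rA rB : Fin 2, (0:ℂ) ≤ ((P rA rB : ℝ) : ℂ) := by
    intro rA rB
    rw [Complex.zero_le_real]
    exact (P rA rB).2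
  have hterm : ∀ rA rB i : Fin 2, (0:ℂ) ≤ ((P rA rB : ℝ) : ℂ) * σ rA rB i i :=
    fun rA rB i => mul_nonneg (hPnn rA rB) (diag_nonneg' (hd rA rB).1 i)
  -- key: P rA rB * (σ rA rB) 0 1 = 0 for rB = 0
  have key : ∀ rA : Fin 2, ((P rA 0 : ℝ) : ℂ) * σ rA 0 0 1 = 0 := by
    intro rA
    fin_cases rA
    · -- rA = 0 : diagonal entry (1,1) of proj (ket 0) vanishes
      have hA := congrArg (fun M => M (1:Fin 2) (1:Fin 2)) (h1 0)
      simp only [Matrix.sum_apply, Matrix.smul_apply, Fin.sum_univ_two, proj,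
        vecMulVec_apply, ket, smul_eq_mul] at hA
      norm_num at hA
      have hzero := (add_eq_zero_iff_of_nonneg (hterm 0 0 1) (hterm 0 1 1)).mp hA |>.1
      rcases mul_eq_zero.mp hzero with hP | hσ
      · simp [hP]
      · have h01 := offdiag_zero (hd 0 0).1 (1 : Fin 2) (0 : Fin 2) hσ
        simp [h01]
    · -- rA = 1 : diagonal entry (0,0) of proj (ket 1) vanishes
      have hA := congrArg (fun M => M (0:Fin 2) (0:Fin 2)) (h1 1)
      simp only [Matrix.sum_apply, Matrix.smul_apply, Fin.sum_univ_two, proj,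
        vecMulVec_apply, ket, smul_eq_mul] at hA
      norm_num at hA
      have hzero := (add_eq_zero_iff_of_nonneg (hterm 1 0 0) (hterm 1 1 0)).mp hA |>.1
      rcases mul_eq_zero.mp hzero with hP | hσ
      · simp [hP]
      · have h10 := offdiag_zero (hd 1 0).1 (0 : Fin 2) (1 : Fin 2) hσ
        have hh := (hd 1 0).1.1
        have hsym := congrArg (fun M => M (0:Fin 2) (1:Fin 2)) hh
        simp only [conjTranspose_apply] at hsym
        have hz : σ 1 0 0 1 = 0 := by rw [← hsym, h10, star_zero]
        simp [hz]
  -- now evaluate condition (ii) for rB = 0 at entry (0,1)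
  have hB := congrArg (fun M => M (0:Fin 2) (1:Fin 2)) (h2 0)
  simp only [Matrix.sum_apply, Matrix.smul_apply, Fin.sum_univ_two, proj,
    vecMulVec_apply, smul_eq_mul] at hB
  rw [key 0, key 1] at hB
  simp only [Pi.star_apply, ketbar] at hB
  norm_num [Complex.conj_ofReal] at hB
end

section
/- Let |0⟩, |1⟩ be the computational basis of ℂ² and |0̄⟩ = (|0⟩+|1⟩)/√2, |1̄⟩ = (|0⟩−|1⟩)/√2 the diagonal basis, and set T₁ = (1/2)(|0⟩⟨0| ⊗ |0⟩⟨0| + |1⟩⟨1| ⊗ |1⟩⟨1|) and T₂ = (1/2)(|0⟩⟨0| ⊗ |0̄⟩⟨0̄| + |1⟩⟨1| ⊗ |1̄⟩⟨1̄|). Then there exists ε > 0 such that no density matrix σ on ℂ² ⊗ ℂ² ⊗ ℂ² (factors R_A, R_B, S) satisfies both ‖tr_{R_B}(σ) − T₁‖₁ ≤ ε and ‖tr_{R_A}(σ) − T₂‖₁ ≤ ε, where ‖·‖₁ denotes the trace norm. (Robust version: even an approximate update rule cannot exist.) -/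
open Matrix BigOperators Kronecker
open scoped ComplexOrder

/-- Partial trace over the middle factor `R_B` of a tripartite state on `R_A ⊗ R_B ⊗ S`. -/
noncomputable def ptraceRB (σ : Matrix (Fin 2 × Fin 2 × Fin 2) (Fin 2 × Fin 2 × Fin 2) ℂ) :
    Matrix (Fin 2 × Fin 2) (Fin 2 × Fin 2) ℂ :=
  fun p q => ∑ k : Fin 2, σ (p.1, k, p.2) (q.1, k, q.2)

/-- Partial trace over the first factor `R_A` of a tripartite state on `R_A ⊗ R_B ⊗ S`. -/
noncomputable def ptraceRA (σ : Matrix (Fin 2 × Fin 2 × Fin 2) (Fin 2 × Fin 2 × Fin 2) ℂ) :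
    Matrix (Fin 2 × Fin 2) (Fin 2 × Fin 2) ℂ :=
  fun p q => ∑ k : Fin 2, σ (k, p.1, p.2) (k, q.1, q.2)

/-- The trace norm `‖A‖₁ = tr √(AᴴA)` of a complex matrix. -/
noncomputable def traceNorm {n : Type*} [Fintype n] [DecidableEq n] (A : Matrix n n ℂ) : ℝ :=
  ((Matrix.posSemidef_conjTranspose_mul_self A).1.eigenvectorUnitary.1 *
      Matrix.diagonal (((↑) : ℝ → ℂ) ∘ (Real.sqrt ·) ∘ (Matrix.posSemidef_conjTranspose_mul_self A).1.eigenvalues) *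
      (star (Matrix.posSemidef_conjTranspose_mul_self A).1.eigenvectorUnitary : Matrix n n ℂ)).trace.re

lemma psd_diag {n : Type*} [Fintype n] [DecidableEq n] {M : Matrix n n ℂ} (hM : M.PosSemidef)
    (i : n) : 0 ≤ (M i i).re ∧ (M i i).im = 0 := by
  have h := hM.dotProduct_mulVec_nonneg (Pi.single i 1)
  have he : star (Pi.single i 1) ⬝ᵥ M *ᵥ (Pi.single i 1 : n → ℂ) = M i i := by
    simp [Matrix.mulVec_single, dotProduct, Pi.single_apply, apply_ite]
  rw [he] at h
  exact RCLike.nonneg_iff.mp h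

open scoped MatrixOrder in
lemma psd_cs {n : Type*} [Fintype n] [DecidableEq n] {M : Matrix n n ℂ} (hM : M.PosSemidef)
    (i j : n) : ‖M i j‖ ^ 2 ≤ (M i i).re * (M j j).re := by
  obtain ⟨B, rfl⟩ := CStarAlgebra.nonneg_iff_eq_star_mul_self.mp hM.nonneg
  simp only [Matrix.star_eq_conjTranspose]
  set x : EuclideanSpace ℂ n := WithLp.toLp 2 (fun k => B k i) with hx
  set y : EuclideanSpace ℂ n := WithLp.toLp 2 (fun k => B k j) with hy
  have hij : (Bᴴ * B) i j = inner ℂ x y := by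
    simp [Matrix.mul_apply, Matrix.conjTranspose_apply, PiLp.inner_apply, RCLike.inner_apply, hx, hy, mul_comm]
  have hii : ((Bᴴ * B) i i).re = ‖x‖ ^ 2 := by
    rw [show (Bᴴ * B) i i = inner ℂ x x from by
      simp [Matrix.mul_apply, Matrix.conjTranspose_apply, PiLp.inner_apply, RCLike.inner_apply, hx, -inner_self_eq_norm_sq_to_K, mul_comm]]
    exact inner_self_eq_norm_sq (𝕜 := ℂ) x
  have hjj : ((Bᴴ * B) j j).re = ‖y‖ ^ 2 := by
    rw [show (Bᴴ * B) j j = inner ℂ y y from by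
      simp [Matrix.mul_apply, Matrix.conjTranspose_apply, PiLp.inner_apply, RCLike.inner_apply, hy, -inner_self_eq_norm_sq_to_K, mul_comm]]
    exact inner_self_eq_norm_sq (𝕜 := ℂ) y
  rw [hij, hii, hjj]
  have h := norm_inner_le_norm (𝕜 := ℂ) x y
  have h2 : ‖(inner ℂ x y : ℂ)‖ = ‖(inner ℂ x y : ℂ)‖ := rfl
  rw [h2]
  nlinarith [norm_nonneg (inner ℂ x y : ℂ), norm_nonneg x, norm_nonneg y]

lemma abs_entry_le_traceNorm {n : Type*} [Fintype n] [DecidableEq n] (A : Matrix n n ℂ)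
    (i j : n) : ‖A i j‖ ≤ traceNorm A := by
  have hP := Matrix.posSemidef_conjTranspose_mul_self A
  set U : Matrix n n ℂ := hP.1.eigenvectorUnitary.1 with hU
  set D : Matrix n n ℂ := Matrix.diagonal (((↑) : ℝ → ℂ) ∘ (Real.sqrt ·) ∘ hP.1.eigenvalues) with hD
  have hUU : star U * U = 1 := Unitary.coe_star_mul_self _
  have hS : (U * D * star U).PosSemidef := by
    have hDp : D.PosSemidef := by
      rw [hD, Matrix.posSemidef_diagonal_iff]
      intro k
      simp [Real.sqrt_nonneg]
    simpa [Matrix.star_eq_conjTranspose] using hDp.mul_mul_conjTranspose_same U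
  have hSS : (U * D * star U) * (U * D * star U) = Aᴴ * A := by
    have hspec := hP.1.spectral_theorem
    rw [Unitary.conjStarAlgAut_apply] at hspec
    have hDD : D * D = diagonal (RCLike.ofReal ∘ hP.1.eigenvalues) := by
      rw [hD, Matrix.diagonal_mul_diagonal]
      congr 1
      funext k
      simp [← Complex.ofReal_mul, Real.mul_self_sqrt (hP.eigenvalues_nonneg k)]
    calc (U * D * star U) * (U * D * star U) = U * (D * (star U * U) * D) * star U := by
          simp only [Matrix.mul_assoc]
      _ = Aᴴ * A := by rw [hUU, Matrix.mul_one, hDD]; exact hspec.symm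
  set S := U * D * star U with hSdef
  set t : ℝ := (S.trace).re with htdef
  rw [show traceNorm A = t from rfl]
  have hdiag : ∀ k, 0 ≤ (S k k).re := fun k => (psd_diag hS k).1
  have htr : t = ∑ k, (S k k).re := by
    rw [htdef, Matrix.trace, Complex.re_sum]; rfl
  have ht0 : 0 ≤ t := by rw [htr]; exact Finset.sum_nonneg fun k _ => hdiag k
  have hdle : ∀ k, (S k k).re ≤ t := by
    intro k
    rw [htr]
    exact Finset.single_le_sum (fun l _ => hdiag l) (Finset.mem_univ k)
  have h1 : ‖A i j‖ ^ 2 ≤ ((Aᴴ * A) j j).re := by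
    have : ((Aᴴ * A) j j).re = ∑ k, Complex.normSq (A k j) := by
      rw [Matrix.mul_apply, Complex.re_sum]
      refine Finset.sum_congr rfl fun k _ => ?_
      rw [Matrix.conjTranspose_apply,
        show (star (A k j)) * A k j = (Complex.normSq (A k j) : ℂ) from by
          rw [mul_comm]; exact Complex.mul_conj _,
        Complex.ofReal_re]
    rw [this, Complex.sq_norm]
    exact Finset.single_le_sum (f := fun k => Complex.normSq (A k j)) (fun k _ => Complex.normSq_nonneg _) (Finset.mem_univ i)
  have h2 : ((S * S) j j).re ≤ t * t := by
    have hherm : ∀ k, S k j = (starRingEnd ℂ) (S j k) := by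
      intro k
      have hh := hS.isHermitian
      rw [Matrix.IsHermitian] at hh
      conv_lhs => rw [← hh]
      rfl
    have : ((S * S) j j).re = ∑ k, Complex.normSq (S j k) := by
      rw [Matrix.mul_apply, Complex.re_sum]
      refine Finset.sum_congr rfl fun k _ => ?_
      rw [hherm k]
      simp [Complex.mul_conj]
    rw [this]
    calc ∑ k, Complex.normSq (S j k) ≤ ∑ k, (S j j).re * (S k k).re := by
          refine Finset.sum_le_sum fun k _ => ?_
          have := psd_cs hS j k
          rwa [Complex.sq_norm] at this
      _ = (S j j).re * ∑ k, (S k k).re := by rw [Finset.mul_sum]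
      _ = (S j j).re * t := by rw [htr]
      _ ≤ t * t := mul_le_mul_of_nonneg_right (hdle j) ht0
  rw [← hSS] at h1
  have habs : ‖A i j‖ ^ 2 ≤ t ^ 2 := by nlinarith
  have hfin := Real.sqrt_le_sqrt habs
  rwa [Real.sqrt_sq (norm_nonneg _), Real.sqrt_sq ht0] at hfin

/-- Robust objective outcome paradox: there is `ε > 0` such that no tripartite state on
`R_A ⊗ R_B ⊗ S` is `ε`-close in trace norm to both required marginals simultaneously. -/
theorem no_approximate_update_rule :
    ∃ ε : ℝ, 0 < ε ∧
      ∀ σ : Matrix (Fin 2 × Fin 2 × Fin 2) (Fin 2 × Fin 2 × Fin 2) ℂ,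
        IsDensity σ →
        ¬ (traceNorm (ptraceRB σ -
              ((1 : ℂ) / 2) •
                (proj (ket 0) ⊗ₖ proj (ket 0) + proj (ket 1) ⊗ₖ proj (ket 1))) ≤ ε ∧
           traceNorm (ptraceRA σ -
              ((1 : ℂ) / 2) •
                (proj (ket 0) ⊗ₖ proj (ketbar 0) + proj (ket 1) ⊗ₖ proj (ketbar 1))) ≤ ε) := by
  refine ⟨1/100, by norm_num, fun σ hσ h => ?_⟩
  obtain ⟨h1, h2⟩ := h
  obtain ⟨hpsd, htr⟩ := hσ
  have hdiag0 : ∀ p, 0 ≤ (σ p p).re := fun p => (psd_diag hpsd p).1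
  have htrre : (∑ p : Fin 2 × Fin 2 × Fin 2, (σ p p).re) = 1 := by
    have h := congrArg Complex.re htr
    rw [Matrix.trace, Complex.re_sum] at h
    simpa [Matrix.diag] using h
  have hdle : ∀ p, (σ p p).re ≤ 1 := fun p => htrre ▸
    Finset.single_le_sum (f := fun q => (σ q q).re) (fun q _ => hdiag0 q) (Finset.mem_univ p)
  have k1 := (abs_entry_le_traceNorm _ ((0,1) : Fin 2 × Fin 2) ((0,1) : Fin 2 × Fin 2)).trans h1
  have k2 := (abs_entry_le_traceNorm _ ((1,0) : Fin 2 × Fin 2) ((1,0) : Fin 2 × Fin 2)).trans h1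
  have k3 := (abs_entry_le_traceNorm _ ((0,0) : Fin 2 × Fin 2) ((0,1) : Fin 2 × Fin 2)).trans h2
  simp [ptraceRB, ptraceRA, proj, ket, ketbar, Matrix.sub_apply, Matrix.add_apply,
    Matrix.smul_apply, Matrix.kroneckerMap_apply, Matrix.vecMulVec_apply,
    Fin.sum_univ_two] at k1 k2 k3
  have k1' : ‖σ (0,0,1) (0,0,1) + σ (0,1,1) (0,1,1)‖ ≤ 100⁻¹ := k1
  have k2' : ‖σ (1,0,0) (1,0,0) + σ (1,1,0) (1,1,0)‖ ≤ 100⁻¹ := k2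
  have hsq : ((Real.sqrt 2 : ℝ) : ℂ)⁻¹ * ((Real.sqrt 2 : ℝ) : ℂ)⁻¹ = 1/2 := by
    rw [← mul_inv, ← Complex.ofReal_mul, Real.mul_self_sqrt (by norm_num : (0:ℝ) ≤ 2)]
    norm_num
  rw [hsq] at k3
  have k3' : ‖σ (0,0,0) (0,0,1) + σ (1,0,0) (1,0,1) - 1/4‖ ≤ 100⁻¹ := by
    have h14 : ((2:ℂ))⁻¹ * (1/2) = 1/4 := by norm_num
    rw [h14] at k3
    exact k3
  have e1 : (σ (0,0,1) (0,0,1)).re ≤ 1/100 := by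
    have hre := (Complex.re_le_norm (σ (0,0,1) (0,0,1) + σ (0,1,1) (0,1,1))).trans k1'
    rw [Complex.add_re] at hre
    have hnn := hdiag0 (0,1,1)
    norm_num at hre hnn ⊢
    linarith
  have e2 : (σ (1,0,0) (1,0,0)).re ≤ 1/100 := by
    have hre := (Complex.re_le_norm (σ (1,0,0) (1,0,0) + σ (1,1,0) (1,1,0))).trans k2'
    rw [Complex.add_re] at hre
    have hnn := hdiag0 (1,1,0)
    norm_num at hre hnn ⊢
    linarith
  have c1 := psd_cs hpsd ((0,0,0) : Fin 2 × Fin 2 × Fin 2) ((0,0,1) : Fin 2 × Fin 2 × Fin 2)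
  have c2 := psd_cs hpsd ((1,0,0) : Fin 2 × Fin 2 × Fin 2) ((1,0,1) : Fin 2 × Fin 2 × Fin 2)
  have b1 : ‖σ (0,0,0) (0,0,1)‖ ≤ 1/10 := by
    nlinarith [norm_nonneg (σ (0,0,0) (0,0,1)), hdiag0 (0,0,0), hdle (0,0,0),
      hdiag0 (0,0,1)]
  have b2 : ‖σ (1,0,0) (1,0,1)‖ ≤ 1/10 := by
    nlinarith [norm_nonneg (σ (1,0,0) (1,0,1)), hdiag0 (1,0,1), hdle (1,0,1),
      hdiag0 (1,0,0)]
  -- triangle inequality contradiction : 1/4 ≤ 1/100 + 1/10 + 1/10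
  set w : ℂ := σ (0,0,0) (0,0,1) + σ (1,0,0) (1,0,1) - 1/4 with hw
  have htri : (1/4 : ℝ) ≤ ‖w‖ + ‖σ (0,0,0) (0,0,1)‖
      + ‖σ (1,0,0) (1,0,1)‖ := by
    have h14 : ‖(σ (0,0,0) (0,0,1) + σ (1,0,0) (1,0,1)) - w‖ = 1/4 := by
      rw [show (σ (0,0,0) (0,0,1) + σ (1,0,0) (1,0,1)) - w = (1/4 : ℂ) from by rw [hw]; ring]
      norm_num
    calc (1/4 : ℝ) = ‖(σ (0,0,0) (0,0,1) + σ (1,0,0) (1,0,1)) - w‖ := h14.symm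
      _ ≤ ‖σ (0,0,0) (0,0,1) + σ (1,0,0) (1,0,1)‖ + ‖w‖ :=
          norm_sub_le _ _
      _ ≤ (‖σ (0,0,0) (0,0,1)‖ + ‖σ (1,0,0) (1,0,1)‖)
          + ‖w‖ := by
          have := norm_add_le (σ (0,0,0) (0,0,1)) (σ (1,0,0) (1,0,1))
          linarith
      _ = ‖w‖ + ‖σ (0,0,0) (0,0,1)‖
          + ‖σ (1,0,0) (1,0,1)‖ := by ring
  have k3'' : ‖w‖ ≤ 1/100 := le_trans k3' (by norm_num)
  linarith
end

section
/- Let a and b be unit vectors in a finite-dimensional complex inner product space. Then the operator norm of the operator T = (1/2)(|a⟩⟨a| + |b⟩⟨b|), i.e. the maximum of ⟨x, T x⟩ over unit vectors x, equals (1 + |⟨a, b⟩|)/2. -/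
open scoped InnerProductSpace

lemma val_eq' {E : Type*} [NormedAddCommGroup E] [InnerProductSpace ℂ E]
    (a b x : E) :
    (⟪x, (((1 / 2 : ℂ) • ((innerSL ℂ a).smulRight a + (innerSL ℂ b).smulRight b)) x)⟫_ℂ).re
      = (‖⟪a, x⟫_ℂ‖^2 + ‖⟪b, x⟫_ℂ‖^2) / 2 := by
  have h1 : ⟪x, a⟫_ℂ = starRingEnd ℂ ⟪a, x⟫_ℂ := (inner_conj_symm x a).symm
  have h2 : ⟪x, b⟫_ℂ = starRingEnd ℂ ⟪b, x⟫_ℂ := (inner_conj_symm x b).symm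
  have r1 : (⟪x, a⟫_ℂ).re = (⟪a, x⟫_ℂ).re := by rw [h1, Complex.conj_re]
  have i1 : (⟪x, a⟫_ℂ).im = -(⟪a, x⟫_ℂ).im := by rw [h1, Complex.conj_im]
  have r2 : (⟪x, b⟫_ℂ).re = (⟪b, x⟫_ℂ).re := by rw [h2, Complex.conj_re]
  have i2 : (⟪x, b⟫_ℂ).im = -(⟪b, x⟫_ℂ).im := by rw [h2, Complex.conj_im]
  simp only [inner_add_right, inner_smul_right, ContinuousLinearMap.add_apply,
    ContinuousLinearMap.smul_apply, ContinuousLinearMap.smulRight_apply, innerSL_apply_apply]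
  simp [Complex.sq_norm, Complex.normSq_apply, Complex.add_re, Complex.mul_re, r1, i1, r2, i2]
  ring

/-- For unit vectors `a, b` in a finite-dimensional complex inner product space, the
maximum of `⟨x, T x⟩` over unit vectors `x`, where `T = (1/2)(|a⟩⟨a| + |b⟩⟨b|)`,
equals `(1 + |⟨a, b⟩|)/2`. -/
theorem norm_average_of_two_projectors {E : Type*} [NormedAddCommGroup E]
    [InnerProductSpace ℂ E] [FiniteDimensional ℂ E]
    (a b : E) (ha : ‖a‖ = 1) (hb : ‖b‖ = 1) :
    IsGreatest
      {r : ℝ | ∃ x : E, ‖x‖ = 1 ∧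
        r = (⟪x, (((1 / 2 : ℂ) • ((innerSL ℂ a).smulRight a + (innerSL ℂ b).smulRight b)) x)⟫_ℂ).re}
      ((1 + ‖⟪a, b⟫_ℂ‖) / 2) := by
  set c : ℂ := ⟪a, b⟫_ℂ with hc
  set t : ℝ := ‖c‖ with ht
  have ht0 : 0 ≤ t := norm_nonneg c
  constructor
  · -- membership: construct the maximizer
    set lam : ℂ := if c = 0 then 1 else (t : ℂ) / c with hlam
    have hlc : lam * c = (t : ℝ) := by
      by_cases h : c = 0
      · simp [hlam, h, ht]
      · rw [hlam, if_neg h]; exact div_mul_cancel₀ _ h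
    have habs : ‖lam‖ = 1 := by
      by_cases h : c = 0
      · simp [hlam, h]
      · have : ‖c‖ ≠ 0 := norm_ne_zero_iff.mpr h
        simp [hlam, h, norm_div, Complex.norm_real, ht, abs_of_nonneg ht0, div_self this]
    have hnl : ‖lam‖ = 1 := habs
    have hsq : ‖a + lam • b‖ ^ 2 = 2 + 2 * t := by
      rw [@norm_add_sq ℂ]
      rw [inner_smul_right, hlc]
      simp [ha, hb, norm_smul, hnl]
      ring
    have hpos : (0:ℝ) < 2 + 2 * t := by linarith
    have hnorm : ‖a + lam • b‖ = Real.sqrt (2 + 2 * t) := by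
      rw [← Real.sqrt_sq (norm_nonneg _), hsq]
    set s : ℝ := Real.sqrt (2 + 2 * t) with hs
    have hspos : 0 < s := Real.sqrt_pos.mpr hpos
    have hssq : s ^ 2 = 2 + 2 * t := Real.sq_sqrt hpos.le
    refine ⟨((s : ℂ))⁻¹ • (a + lam • b), ?_, ?_⟩
    · rw [norm_smul, hnorm]
      simp [abs_of_pos hspos, hspos.ne']
    · rw [val_eq']
      have hia : ⟪a, ((s : ℂ))⁻¹ • (a + lam • b)⟫_ℂ = (s : ℂ)⁻¹ * (1 + t) := by
        rw [inner_smul_right, inner_add_right, inner_smul_right, ← hc, hlc]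
        rw [inner_self_eq_norm_sq_to_K, ha]
        push_cast
        ring
      have hba : ⟪b, a⟫_ℂ = starRingEnd ℂ c := by rw [hc, inner_conj_symm]
      have hkey : starRingEnd ℂ c + lam = lam * (1 + t) := by
        have h1 : lam * (t : ℂ) = starRingEnd ℂ c := by
          have := congrArg (starRingEnd ℂ) hlc
          simp only [map_mul, Complex.conj_ofReal] at this
          calc lam * (t:ℂ) = lam * (starRingEnd ℂ lam * starRingEnd ℂ c) := by rw [← this]
          _ = (lam * starRingEnd ℂ lam) * starRingEnd ℂ c := by ring
          _ = starRingEnd ℂ c := by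
              rw [Complex.mul_conj, Complex.normSq_eq_norm_sq, habs]; simp
        rw [mul_add, mul_one, ← h1]; ring
      have hib : ⟪b, ((s : ℂ))⁻¹ • (a + lam • b)⟫_ℂ = (s : ℂ)⁻¹ * (lam * (1 + t)) := by
        rw [inner_smul_right, inner_add_right, inner_smul_right, hba,
          inner_self_eq_norm_sq_to_K, hb]
        rw [← hkey]
        push_cast
        ring
      rw [hia, hib]
      have h1t : (0:ℝ) ≤ 1 + t := by linarith
      have e1 : ‖(s : ℂ)⁻¹ * (1 + t)‖ = s⁻¹ * (1 + t) := by
        rw [norm_mul]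
        simp [Complex.norm_real, abs_of_pos hspos, abs_of_nonneg h1t]
        norm_cast
        simp [abs_of_nonneg h1t]
      have e2 : ‖(s : ℂ)⁻¹ * (lam * (1 + t))‖ = s⁻¹ * (1 + t) := by
        rw [norm_mul, norm_mul, hnl]
        simp [Complex.norm_real, abs_of_pos hspos]
        norm_cast
        simp [abs_of_nonneg h1t]
      rw [e1, e2]
      have hinv : s⁻¹ ^ 2 = (2 + 2 * t)⁻¹ := by rw [← hssq, inv_pow]
      simp only [mul_pow, hinv]
      field_simp
      ring
  · -- upper bound
    rintro r ⟨x, hx, rfl⟩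
    rw [val_eq']
    set α : ℂ := ⟪a, x⟫_ℂ with hα
    set β : ℂ := ⟪b, x⟫_ℂ with hβ
    set S : ℝ := ‖α‖ ^ 2 + ‖β‖ ^ 2 with hS
    have hS0 : 0 ≤ S := by positivity
    suffices h : S ≤ 1 + t by linarith
    set y : E := α • a + β • b with hy
    have hxy : ⟪x, y⟫_ℂ = (S : ℂ) := by
      rw [hy, inner_add_right, inner_smul_right, inner_smul_right]
      rw [show ⟪x, a⟫_ℂ = starRingEnd ℂ α by rw [hα, inner_conj_symm],
          show ⟪x, b⟫_ℂ = starRingEnd ℂ β by rw [hβ, inner_conj_symm]]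
      rw [Complex.mul_conj, Complex.mul_conj]
      rw [Complex.normSq_eq_norm_sq, Complex.normSq_eq_norm_sq]
      push_cast
      rw [hS]
      norm_cast
    have hSy : S ≤ ‖y‖ := by
      have h1 : S = (⟪x, y⟫_ℂ).re := by rw [hxy]; simp
      have h2 : (⟪x, y⟫_ℂ).re ≤ ‖⟪x, y⟫_ℂ‖ := Complex.re_le_norm _
      have h3 : ‖⟪x, y⟫_ℂ‖ ≤ ‖x‖ * ‖y‖ := norm_inner_le_norm x y
      rw [hx, one_mul] at h3
      linarith
    have hy2 : ‖y‖ ^ 2 ≤ S * (1 + t) := by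
      rw [hy, @norm_add_sq ℂ]
      rw [inner_smul_left, inner_smul_right]
      have hre : (starRingEnd ℂ α * (β * c)).re ≤ ‖α‖ * ‖β‖ * t := by
        have := Complex.re_le_norm (starRingEnd ℂ α * (β * c))
        have habs : ‖starRingEnd ℂ α * (β * c)‖ = ‖α‖ * (‖β‖ * t) := by
          simp [map_mul, ht, norm_mul]
        rw [habs] at this
        linarith [this]
      have hab2 : 2 * (‖α‖ * ‖β‖) ≤ ‖α‖ ^ 2 + ‖β‖ ^ 2 := by nlinarith [sq_nonneg (‖α‖ - ‖β‖)]
      have h1 : ‖α • a‖ ^ 2 = ‖α‖ ^ 2 := by rw [norm_smul, ha, mul_one]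
      have h2 : ‖β • b‖ ^ 2 = ‖β‖ ^ 2 := by rw [norm_smul, hb, mul_one]
      rw [h1, h2]
      simp only [RCLike.re_to_complex, ← hc]
      have : 2 * (‖α‖ * ‖β‖ * t) ≤ S * t := by
        rcases eq_or_lt_of_le ht0 with h | h
        · rw [← h]; simp
        · have := mul_le_mul_of_nonneg_right hab2 ht0
          rw [hS]; nlinarith
      rw [hS]
      nlinarith [hre]
    have hS2 : S ^ 2 ≤ S * (1 + t) := by
      calc S ^ 2 ≤ ‖y‖ ^ 2 := by nlinarith [norm_nonneg y]
      _ ≤ S * (1 + t) := hy2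
    by_contra hcon
    push_neg at hcon
    have hSpos : 0 < S := by linarith
    nlinarith
end
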